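/- Let p : Σ_𝒳 → ℝ, let n₀ ≥ 1, and suppose that for every n ≥ n₀ there is a gamble b^n on 𝒩^n with p(θ) = Σ_{m∈𝒩^n} b^n(m)·B_m(θ) for all θ ∈ Σ_𝒳 (so p is a polynomial gamble of degree at most n₀). Then lim_{n→∞} min_{m∈𝒩^n} b^n(m) = min_{θ∈Σ_𝒳} p(θ) and lim_{n→∞} max_{m∈𝒩^n} b^n(m) = max_{θ∈Σ_𝒳} p(θ). -/

import Mathlib

open Finset Filter Topology

/-- A coherent lower prevision on the gambles over a finite nonempty space `Ω`. -/
def LowerPrevCoherent {Ω : Type*} [Fintype Ω] [Nonempty Ω] (P : (Ω → ℝ) → ℝ) : Prop :=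
  (∀ f : Ω → ℝ, sInf (Set.range f) ≤ P f) ∧
  (∀ (f : Ω → ℝ) (l : ℝ), 0 ≤ l → P (fun ω => l * f ω) = l * P f) ∧
  (∀ f g : Ω → ℝ, P f + P g ≤ P (f + g))

/-- A linear prevision on the gambles over a finite nonempty space `Ω`. -/
def LinearPrevision {Ω : Type*} [Fintype Ω] [Nonempty Ω] (P : (Ω → ℝ) → ℝ) : Prop :=
  (∀ f g : Ω → ℝ, P (f + g) = P f + P g) ∧
  (∀ (l : ℝ) (f : Ω → ℝ), P (fun ω => l * f ω) = l * P f) ∧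
  (∀ f : Ω → ℝ, (∀ ω, 0 ≤ f ω) → 0 ≤ P f) ∧
  P (fun _ => 1) = 1

/-- Exchangeability of a lower prevision on gambles on `X^N`:
`P (πf − f) ≥ 0` for every gamble `f` and every permutation `π`. -/
def Exchangeable {X : Type*} {N : ℕ} (P : ((Fin N → X) → ℝ) → ℝ) : Prop :=
  ∀ (f : (Fin N → X) → ℝ) (π : Equiv.Perm (Fin N)),
    0 ≤ P (fun x => f (fun k => x (π k)) - f x)

/-- The set of count vectors `𝒩^n`. -/
abbrev CVec (X : Type*) [Fintype X] (n : ℕ) : Type _ := {m : X → ℕ // ∑ x, m x = n}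

noncomputable instance {X : Type*} [Fintype X] [DecidableEq X] (n : ℕ) : Fintype (CVec X n) := by
  have key : ∀ (m : CVec X n) (x : X), m.1 x < n + 1 := by
    intro m x
    have h1 : m.1 x ≤ ∑ y, m.1 y :=
      Finset.single_le_sum (fun i _ => Nat.zero_le _) (Finset.mem_univ x)
    have h2 := m.2
    omega
  exact Fintype.ofInjective (fun m : CVec X n => fun x => (⟨m.1 x, key m x⟩ : Fin (n+1)))
    (fun a b hab => Subtype.ext (funext fun x => congrArg Fin.val (congrFun hab x)))

instance {X : Type*} [Fintype X] [DecidableEq X] [Nonempty X] (n : ℕ) :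
    Nonempty (CVec X n) :=
  ⟨⟨fun x => if x = Classical.arbitrary X then n else 0, by simp⟩⟩

/-- The counting map `T^n : X^n → 𝒩^n`. -/
def countMap {X : Type*} [Fintype X] [DecidableEq X] (n : ℕ) (z : Fin n → X) : CVec X n :=
  ⟨fun x => (Finset.univ.filter fun k => z k = x).card, by
    have h := Finset.card_eq_sum_card_fiberwise (f := z) (s := Finset.univ) (t := Finset.univ)
      (fun k _ => Finset.mem_univ (z k))
    simpa using h.symm⟩

/-- `ν(m) = n!/∏ₓ mₓ!` for a count vector `m ∈ 𝒩^n`. -/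
def nu {X : Type*} [Fintype X] {n : ℕ} (m : CVec X n) : ℕ :=
  Nat.multinomial Finset.univ m.1

/-- `ν(μ − m)`, which is `0` unless `m ≤ μ` componentwise. -/
def nuSub {X : Type*} [Fintype X] {n k : ℕ} (μ : CVec X (n + k)) (m : CVec X n) : ℕ :=
  if ∀ x, m.1 x ≤ μ.1 x then Nat.multinomial Finset.univ (fun x => μ.1 x - m.1 x) else 0

/-- The multiple hyper-geometric prevision `MuHy^n(f|m) = (1/ν(m)) ∑_{z∈[m]} f(z)`. -/
noncomputable def MuHy {X : Type*} [Fintype X] [DecidableEq X] {n : ℕ}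
    (f : (Fin n → X) → ℝ) (m : CVec X n) : ℝ :=
  (∑ z ∈ Finset.univ.filter fun z : Fin n → X => countMap n z = m, f z) / (nu m : ℝ)

/-- The `X`-simplex `Σ_X`, as a subtype of `X → ℝ`. -/
abbrev SimplexPt (X : Type*) [Fintype X] : Type _ :=
  {θ : X → ℝ // (∀ x, 0 ≤ θ x) ∧ ∑ x, θ x = 1}

/-- The Bernstein basis polynomial `B_m(θ) = ν(m) ∏ₓ θₓ^{mₓ}`. -/
noncomputable def Bern {X : Type*} [Fintype X] {n : ℕ} (m : CVec X n) (θ : X → ℝ) : ℝ :=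
  (nu m : ℝ) * ∏ x, θ x ^ m.1 x

/-- The count multinomial expectation `CoMn^n(g|θ) = ∑_m g(m) B_m(θ)`. -/
noncomputable def CoMn {X : Type*} [Fintype X] [DecidableEq X] {n : ℕ} (g : CVec X n → ℝ) (θ : X → ℝ) : ℝ :=
  ∑ m : CVec X n, g m * Bern m θ

/-- The multinomial expectation `Mn^n(f|θ) = ∑_z f(z) ∏ₓ θₓ^{Tₓ(z)}`. -/
noncomputable def Mn {X : Type*} [Fintype X] [DecidableEq X] {n : ℕ}
    (f : (Fin n → X) → ℝ) (θ : X → ℝ) : ℝ :=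
  ∑ z : Fin n → X, f z * ∏ x, θ x ^ (countMap n z).1 x

/-- `CoMn^n(g|·)` as a function on the simplex. -/
noncomputable def CoMnP {X : Type*} [Fintype X] [DecidableEq X] {n : ℕ} (g : CVec X n → ℝ)
    (θ : SimplexPt X) : ℝ :=
  CoMn g θ.1

/-- `Mn^n(f|·)` as a function on the simplex. -/
noncomputable def MnP {X : Type*} [Fintype X] [DecidableEq X] {n : ℕ}
    (f : (Fin n → X) → ℝ) (θ : SimplexPt X) : ℝ :=
  Mn f θ.1

/-- Polynomial gambles on the simplex: the set `𝒱(Σ_X)`. -/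
def IsPolyGamble {X : Type*} [Fintype X] [DecidableEq X] (p : SimplexPt X → ℝ) : Prop :=
  ∃ n : ℕ, 1 ≤ n ∧ ∃ g : CVec X n → ℝ, p = fun θ => CoMnP g θ

/-- Coherence of a functional on the linear space `𝒱(Σ_X)` of polynomial gambles. -/
def CoherentOnPoly {X : Type*} [Fintype X] [DecidableEq X] (S : (SimplexPt X → ℝ) → ℝ) : Prop :=
  (∀ p, IsPolyGamble p → sInf (Set.range p) ≤ S p) ∧
  (∀ p, IsPolyGamble p → ∀ l : ℝ, 0 ≤ l → S (fun θ => l * p θ) = l * S p) ∧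
  (∀ p q, IsPolyGamble p → IsPolyGamble q → S p + S q ≤ S (p + q))

/-- Cylindrical extension of a gamble on `X^n` to `X^{n+k}`. -/
def cylExt {X : Type*} {n k : ℕ} (f : (Fin n → X) → ℝ) : (Fin (n + k) → X) → ℝ :=
  fun z => f fun i => z (Fin.castLE (Nat.le_add_right n k) i)

/-- Time consistency of a family of lower previsions on the `X^n`. -/
def PTimeConsistent {X : Type*} (P : ∀ n : ℕ, ((Fin n → X) → ℝ) → ℝ) : Prop :=
  ∀ n : ℕ, 1 ≤ n → ∀ (k : ℕ) (f : (Fin n → X) → ℝ), P n f = P (n + k) (cylExt f)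

/-- Time consistency of a family of count lower previsions on the `𝒩^n`. -/
def QTimeConsistent {X : Type*} [Fintype X] [DecidableEq X] (Q : ∀ n : ℕ, (CVec X n → ℝ) → ℝ) : Prop :=
  ∀ n : ℕ, 1 ≤ n → ∀ (k : ℕ) (h : CVec X n → ℝ),
    Q n h = Q (n + k) (fun μ => ∑ m : CVec X n, ((nuSub μ m : ℝ) * (nu m : ℝ) / (nu μ : ℝ)) * h m)

/-- The relative frequency vector `m/n ∈ Σ_X` of a count vector `m ∈ 𝒩^n`, `n ≥ 1`. -/
noncomputable def freqPt {X : Type*} [Fintype X] {n : ℕ} (hn : 0 < n) (m : CVec X n) :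
    SimplexPt X :=
  ⟨fun x => (m.1 x : ℝ) / n,
   fun x => div_nonneg (Nat.cast_nonneg _) (Nat.cast_nonneg _),
   by
    rw [← Finset.sum_div]
    have h : (∑ x, (m.1 x : ℝ)) = (n : ℝ) := by exact_mod_cast m.2
    rw [h]
    exact div_self (Nat.cast_ne_zero.mpr hn.ne')⟩

/-- `ḡ(μ) = ∑_m (ν(m) ν(μ−m) / ν(μ)) g(m)`. -/
noncomputable def gbar {X : Type*} [Fintype X] [DecidableEq X] {n k : ℕ}
    (g : CVec X n → ℝ) (μ : CVec X (n + k)) : ℝ :=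
  ∑ m : CVec X n, ((nu m : ℝ) * (nuSub μ m : ℝ) / (nu μ : ℝ)) * g m

section Aux
variable {X : Type*} [Fintype X] [DecidableEq X]

lemma cvec_sum_pow (θ : X → ℝ) (n : ℕ) :
    ∑ m : CVec X n, (nu m : ℝ) * ∏ x, θ x ^ m.1 x = (∑ x, θ x) ^ n := by
  rw [Finset.sum_pow_eq_sum_piAntidiag Finset.univ θ n]
  refine Finset.sum_bij' (fun (m : CVec X n) _ => m.1)
    (fun (f : X → ℕ) (hf : f ∈ Finset.piAntidiag Finset.univ n) =>
      (⟨f, (Finset.mem_piAntidiag.mp hf).1⟩ : CVec X n)) ?_ ?_ ?_ ?_ ?_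
  · intro m _
    rw [Finset.mem_piAntidiag]
    exact ⟨m.2, fun i _ => Finset.mem_univ i⟩
  · intro f hf; exact Finset.mem_univ _
  · intro m _; rfl
  · intro f hf; rfl
  · intro m _; rfl

lemma nu_pos {n : ℕ} (m : CVec X n) : 0 < nu m := Nat.multinomial_pos _ _

/-- reindexing: sum over `μ ≥ m` of `ν(μ-m) ∏ θ^μ` equals sum over `l` of `ν(l) ∏ θ^(m+l)`. -/
lemma reindex_sum {n k : ℕ} (m : CVec X n) (θ : X → ℝ) :
    ∑ μ : CVec X (n + k), (nuSub μ m : ℝ) * ∏ x, θ x ^ μ.1 x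
      = ∑ l : CVec X k, (nu l : ℝ) * ∏ x, θ x ^ (m.1 x + l.1 x) := by
  classical
  have hsplit : ∑ μ : CVec X (n + k), (nuSub μ m : ℝ) * ∏ x, θ x ^ μ.1 x
      = ∑ μ ∈ Finset.univ.filter (fun μ : CVec X (n+k) => ∀ x, m.1 x ≤ μ.1 x),
          (nuSub μ m : ℝ) * ∏ x, θ x ^ μ.1 x := by
    symm
    apply Finset.sum_filter_of_ne
    intro μ _ hne
    by_contra hμ
    apply hne
    unfold nuSub
    rw [if_neg hμ, Nat.cast_zero, zero_mul]
  rw [hsplit]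
  · refine Finset.sum_bij' (fun (μ : CVec X (n+k)) hμ =>
      (⟨fun x => μ.1 x - m.1 x, ?_⟩ : CVec X k))
      (fun (l : CVec X k) _ => (⟨fun x => m.1 x + l.1 x, ?_⟩ : CVec X (n+k))) ?_ ?_ ?_ ?_ ?_
    · have hle : ∀ x, m.1 x ≤ μ.1 x := by
        simpa using (Finset.mem_filter.mp hμ).2
      have h1 : ∑ x, (μ.1 x - m.1 x) = (∑ x, μ.1 x) - ∑ x, m.1 x := by
        rw [Finset.sum_tsub_distrib]; intro x _; exact hle x
      rw [h1, μ.2, m.2]; omega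
    · rw [Finset.sum_add_distrib, m.2, l.2]
    · intro μ hμ; exact Finset.mem_univ _
    · intro l _
      simp only [Finset.mem_filter, Finset.mem_univ, true_and]
      intro x; omega
    · intro μ hμ
      have hle : ∀ x, m.1 x ≤ μ.1 x := by
        simpa using (Finset.mem_filter.mp hμ).2
      apply Subtype.ext; funext x
      show m.1 x + (μ.1 x - m.1 x) = μ.1 x
      have := hle x; omega
    · intro l _
      apply Subtype.ext; funext x
      show (m.1 x + l.1 x) - m.1 x = l.1 x
      omega
    · intro μ hμ
      have hle : ∀ x, m.1 x ≤ μ.1 x := by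
        simpa using (Finset.mem_filter.mp hμ).2
      congr 1
      · unfold nuSub
        rw [if_pos hle]
        rfl
      · apply Finset.prod_congr rfl; intro x _
        show θ x ^ μ.1 x = θ x ^ (m.1 x + (μ.1 x - m.1 x))
        congr 1
        have := hle x; omega

/-- Degree elevation: `CoMn (gbar g) = CoMn g` on the simplex. -/
lemma elevation {n k : ℕ} (g : CVec X n → ℝ) (θ : SimplexPt X) :
    CoMn (fun μ : CVec X (n + k) => gbar g μ) θ.1 = CoMn g θ.1 := by
  unfold CoMn gbar Bern
  have hθ1 : ∑ x, θ.1 x = 1 := θ.2.2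
  calc ∑ μ : CVec X (n+k), (∑ m : CVec X n,
          ((nu m : ℝ) * (nuSub μ m : ℝ) / (nu μ : ℝ)) * g m) * ((nu μ : ℝ) * ∏ x, θ.1 x ^ μ.1 x)
      = ∑ μ : CVec X (n+k), ∑ m : CVec X n,
          g m * (nu m : ℝ) * ((nuSub μ m : ℝ) * ∏ x, θ.1 x ^ μ.1 x) := by
        refine Finset.sum_congr rfl fun μ _ => ?_
        rw [Finset.sum_mul]
        refine Finset.sum_congr rfl fun m _ => ?_
        have hν : (nu μ : ℝ) ≠ 0 := Nat.cast_ne_zero.mpr (nu_pos μ).ne'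
        field_simp
        try ring
    _ = ∑ m : CVec X n, g m * (nu m : ℝ) *
          ∑ μ : CVec X (n+k), (nuSub μ m : ℝ) * ∏ x, θ.1 x ^ μ.1 x := by
        rw [Finset.sum_comm]
        refine Finset.sum_congr rfl fun m _ => ?_
        rw [Finset.mul_sum]
    _ = ∑ m : CVec X n, g m * ((nu m : ℝ) * ∏ x, θ.1 x ^ m.1 x) := by
        refine Finset.sum_congr rfl fun m _ => ?_
        rw [reindex_sum m θ.1]
        have : ∑ l : CVec X k, (nu l : ℝ) * ∏ x, θ.1 x ^ (m.1 x + l.1 x)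
            = (∏ x, θ.1 x ^ m.1 x) * ∑ l : CVec X k, (nu l : ℝ) * ∏ x, θ.1 x ^ l.1 x := by
          rw [Finset.mul_sum]
          refine Finset.sum_congr rfl fun l _ => ?_
          simp_rw [pow_add, Finset.prod_mul_distrib]
          ring
        rw [this, cvec_sum_pow, hθ1, one_pow, mul_one]
        ring
end Aux

section Uniq
variable {X : Type*} [Fintype X] [DecidableEq X]

/-- Linear independence of Bernstein polynomials on the simplex. -/
lemma coMn_zero {n : ℕ} (hn : 1 ≤ n) (c : CVec X n → ℝ)
    (h : ∀ θ : SimplexPt X, CoMn c θ.1 = 0) : ∀ m, c m = 0 := by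
  classical
  set P : MvPolynomial X ℝ := ∑ m : CVec X n,
    MvPolynomial.monomial (Finsupp.equivFunOnFinite.symm (fun x => 2 * m.1 x)) (c m * (nu m : ℝ))
    with hP
  have heval : ∀ s : X → ℝ, MvPolynomial.eval s P
      = ∑ m : CVec X n, c m * (nu m : ℝ) * ∏ x, s x ^ (2 * m.1 x) := by
    intro s
    rw [hP, map_sum]
    refine Finset.sum_congr rfl fun m _ => ?_
    rw [MvPolynomial.eval_monomial]
    congr 1
    rw [Finsupp.prod_fintype]
    · rfl
    · intro i; rfl
  have hzero : ∀ s : X → ℝ, MvPolynomial.eval s P = 0 := by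
    intro s
    rw [heval]
    by_cases hs : ∑ x, s x ^ 2 = 0
    · have hsx : ∀ x, s x = 0 := by
        intro x
        have h1 : ∀ y ∈ (Finset.univ : Finset X), 0 ≤ s y ^ 2 := fun y _ => sq_nonneg _
        have := (Finset.sum_eq_zero_iff_of_nonneg h1).mp hs x (Finset.mem_univ x)
        exact pow_eq_zero_iff (n := 2) (by norm_num) |>.mp this
      refine Finset.sum_eq_zero fun m _ => ?_
      have hex : ∃ x, 0 < m.1 x := by
        by_contra hne
        push_neg at hne
        have : ∑ x, m.1 x = 0 := Finset.sum_eq_zero fun x _ => Nat.le_zero.mp (hne x)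
        rw [m.2] at this; omega
      obtain ⟨x₀, hx₀⟩ := hex
      have : ∏ x, s x ^ (2 * m.1 x) = 0 :=
        Finset.prod_eq_zero (Finset.mem_univ x₀) (by rw [hsx x₀]; exact zero_pow (by omega))
      rw [this, mul_zero]
    · have hT : 0 < ∑ x, s x ^ 2 :=
        lt_of_le_of_ne (Finset.sum_nonneg fun x _ => sq_nonneg _) (Ne.symm hs)
      set T := ∑ x, s x ^ 2 with hTdef
      have hθ : ∀ x, 0 ≤ s x ^ 2 / T := fun x => div_nonneg (sq_nonneg _) hT.le
      have hθs : ∑ x, s x ^ 2 / T = 1 := by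
        rw [← Finset.sum_div, ← hTdef, div_self hs]
      have h00 := h ⟨fun x => s x ^ 2 / T, hθ, hθs⟩
      unfold CoMn Bern at h00
      have h0 : ∑ m : CVec X n, c m * ((nu m : ℝ) * ∏ x, (s x ^ 2 / T) ^ m.1 x) = 0 := h00
      have hexp : ∀ m : CVec X n,
          ∏ x, (s x ^ 2 / T) ^ m.1 x = (∏ x, s x ^ (2 * m.1 x)) / T ^ n := by
        intro m
        have e1 : ∏ x, (s x ^ 2 / T) ^ m.1 x
            = (∏ x, s x ^ (2 * m.1 x)) / T ^ (∑ x, m.1 x) := by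
          rw [← Finset.prod_pow_eq_pow_sum, ← Finset.prod_div_distrib]
          refine Finset.prod_congr rfl fun x _ => ?_
          rw [div_pow, pow_mul]
        rw [e1, m.2]
      simp only [hexp] at h0
      have hTn : (0:ℝ) < T ^ n := pow_pos hT n
      have := congrArg (fun t => t * T ^ n) h0
      simp only [Finset.sum_mul, zero_mul] at this
      rw [← this]
      refine Finset.sum_congr rfl fun m _ => ?_
      field_simp
      try ring
  have hPzero : P = 0 := by
    apply MvPolynomial.funext
    intro s
    rw [hzero s, map_zero]
  intro m₀
  have hcoeff := congrArg
    (MvPolynomial.coeff (Finsupp.equivFunOnFinite.symm (fun x => 2 * m₀.1 x))) hPzero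
  rw [hP, MvPolynomial.coeff_sum] at hcoeff
  simp only [MvPolynomial.coeff_monomial, MvPolynomial.coeff_zero] at hcoeff
  rw [Finset.sum_eq_single m₀] at hcoeff
  · rw [if_pos rfl] at hcoeff
    have hν : (nu m₀ : ℝ) ≠ 0 := Nat.cast_ne_zero.mpr (nu_pos m₀).ne'
    exact (mul_eq_zero.mp hcoeff).resolve_right hν
  · intro m _ hm
    rw [if_neg]
    intro heq
    apply hm
    have := Finsupp.equivFunOnFinite.symm.injective heq
    have h2 : ∀ x, 2 * m.1 x = 2 * m₀.1 x := fun x => congrFun this x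
    exact Subtype.ext (funext fun x => by have := h2 x; omega)
  · intro hm₀
    exact absurd (Finset.mem_univ m₀) hm₀
end Uniq

section Estimates

lemma pow_le_desc_aux (n : ℕ) : ∀ k : ℕ, n ^ (k+1) ≤ n.descFactorial (k+1) + (k+1)*(k+1) * n ^ k
  | 0 => by simp [Nat.descFactorial_succ]
  | (k+1) => by
    have IH := pow_le_desc_aux n k
    have h1 : n ^ (k+2) = n * n ^ (k+1) := by ring
    have h2 : n * n ^ (k+1) ≤ n * (n.descFactorial (k+1) + (k+1)*(k+1) * n ^ k) :=
      Nat.mul_le_mul_left n IH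
    have h3 : n * n.descFactorial (k+1) ≤ n.descFactorial (k+2) + (k+1) * n.descFactorial (k+1) := by
      rw [Nat.descFactorial_succ (k := k+1)]
      have : (n - (k+1)) * n.descFactorial (k+1) + (k+1) * n.descFactorial (k+1)
          ≥ n * n.descFactorial (k+1) := by
        rw [← Nat.add_mul]
        exact Nat.mul_le_mul_right _ (by omega)
      omega
    have h4 : n.descFactorial (k+1) ≤ n ^ (k+1) := Nat.descFactorial_le_pow n (k+1)
    have h5 : n * ((k+1)*(k+1) * n ^ k) ≤ (k+1)*(k+1) * n ^ (k+1) := by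
      have : n * ((k+1)*(k+1) * n ^ k) = (k+1)*(k+1) * (n * n ^ k) := by ring
      rw [this, ← pow_succ']
    calc n ^ (k+2) = n * n ^ (k+1) := h1
      _ ≤ n * n.descFactorial (k+1) + n * ((k+1)*(k+1) * n ^ k) := by rw [← Nat.mul_add]; exact h2
      _ ≤ n.descFactorial (k+2) + (k+1) * n.descFactorial (k+1) + (k+1)*(k+1) * n ^ (k+1) := by
          omega
      _ ≤ n.descFactorial (k+2) + (k+2)*(k+2) * n ^ (k+1) := by
          have := Nat.mul_le_mul_left (k+1) h4
          nlinarith [pow_nonneg (Nat.zero_le n) (k+1)]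

lemma sub_pow_le_desc (n : ℕ) : ∀ k : ℕ, (n - k) ^ k ≤ n.descFactorial k
  | 0 => by simp
  | (k+1) => by
    rw [Nat.descFactorial_succ, pow_succ']
    refine Nat.mul_le_mul (by omega) ?_
    calc (n - (k+1)) ^ k ≤ (n - k) ^ k := Nat.pow_le_pow_left (by omega) k
      _ ≤ n.descFactorial k := sub_pow_le_desc n k

/-- Product comparison in `[0,1]`. -/
lemma prod_le_prod_add {ι : Type*} (s : Finset ι) (a b : ι → ℝ)
    (h0 : ∀ i ∈ s, 0 ≤ a i) (hab : ∀ i ∈ s, a i ≤ b i) (hb1 : ∀ i ∈ s, b i ≤ 1) :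
    ∏ i ∈ s, b i ≤ ∏ i ∈ s, a i + ∑ i ∈ s, (b i - a i) := by
  classical
  induction s using Finset.cons_induction with
  | empty => simp
  | cons j s hj IH =>
    rw [Finset.prod_cons, Finset.prod_cons, Finset.sum_cons]
    have h0' : ∀ i ∈ s, 0 ≤ a i := fun i hi => h0 i (Finset.mem_cons_of_mem hi)
    have hab' : ∀ i ∈ s, a i ≤ b i := fun i hi => hab i (Finset.mem_cons_of_mem hi)
    have hb1' : ∀ i ∈ s, b i ≤ 1 := fun i hi => hb1 i (Finset.mem_cons_of_mem hi)
    have IH' := IH h0' hab' hb1'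
    have hja : 0 ≤ a j := h0 j (Finset.mem_cons_self _ _)
    have hjab : a j ≤ b j := hab j (Finset.mem_cons_self _ _)
    have hjb : b j ≤ 1 := hb1 j (Finset.mem_cons_self _ _)
    have hpa : 0 ≤ ∏ i ∈ s, a i := Finset.prod_nonneg h0'
    have hpa1 : ∏ i ∈ s, a i ≤ 1 :=
      Finset.prod_le_one h0' (fun i hi => le_trans (hab' i hi) (hb1' i hi))
    have hsum : 0 ≤ ∑ i ∈ s, (b i - a i) :=
      Finset.sum_nonneg fun i hi => sub_nonneg.mpr (hab' i hi)
    calc b j * ∏ i ∈ s, b i ≤ b j * (∏ i ∈ s, a i + ∑ i ∈ s, (b i - a i)) :=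
          mul_le_mul_of_nonneg_left IH' (le_trans hja hjab)
      _ = b j * ∏ i ∈ s, a i + b j * ∑ i ∈ s, (b i - a i) := by ring
      _ ≤ b j * ∏ i ∈ s, a i + ∑ i ∈ s, (b i - a i) := by
          have h1 : b j * ∑ i ∈ s, (b i - a i) ≤ ∑ i ∈ s, (b i - a i) :=
            mul_le_of_le_one_left hsum hjb
          linarith
      _ = a j * ∏ i ∈ s, a i + (b j - a j) * ∏ i ∈ s, a i + ∑ i ∈ s, (b i - a i) := by ring
      _ ≤ a j * ∏ i ∈ s, a i + (b j - a j) + ∑ i ∈ s, (b i - a i) := by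
          have h1 : (b j - a j) * ∏ i ∈ s, a i ≤ (b j - a j) * 1 :=
            mul_le_mul_of_nonneg_left hpa1 (by linarith)
          linarith
      _ = a j * ∏ i ∈ s, a i + ((b j - a j) + ∑ i ∈ s, (b i - a i)) := by ring
end Estimates

section Weight
variable {X : Type*} [Fintype X] [DecidableEq X]

lemma nuSub_ratio_nat {n₀ k : ℕ} (μ : CVec X (n₀ + k)) (m : CVec X n₀)
    (hle : ∀ x, m.1 x ≤ μ.1 x) :
    nuSub μ m * (n₀ + k).descFactorial n₀
      = nu μ * ∏ x, (μ.1 x).descFactorial (m.1 x) := by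
  classical
  have hsum : ∑ x, (μ.1 x - m.1 x) = k := by
    have h1 : ∑ x, (μ.1 x - m.1 x) = (∑ x, μ.1 x) - ∑ x, m.1 x := by
      rw [Finset.sum_tsub_distrib]; intro x _; exact hle x
    rw [h1, μ.2, m.2]; omega
  have e1 : (∏ x, (μ.1 x - m.1 x).factorial) * nuSub μ m = k.factorial := by
    unfold nuSub
    rw [if_pos hle]
    have := Nat.multinomial_spec Finset.univ (fun x => μ.1 x - m.1 x)
    rw [hsum] at this
    exact this
  have e2 : (∏ x, (μ.1 x).factorial) * nu μ = (n₀ + k).factorial := by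
    have := Nat.multinomial_spec Finset.univ μ.1
    rw [μ.2] at this
    exact this
  have e3 : k.factorial * (n₀ + k).descFactorial n₀ = (n₀ + k).factorial := by
    have := Nat.factorial_mul_descFactorial (n := n₀ + k) (k := n₀) (by omega)
    simpa [Nat.add_sub_cancel_left] using this
  have e4 : ∀ x, (μ.1 x - m.1 x).factorial * (μ.1 x).descFactorial (m.1 x)
      = (μ.1 x).factorial := fun x => Nat.factorial_mul_descFactorial (hle x)
  apply Nat.eq_of_mul_eq_mul_left
    (show 0 < (∏ x, (μ.1 x - m.1 x).factorial) * k.factorial from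
      Nat.mul_pos (Finset.prod_pos fun x _ => Nat.factorial_pos _) (Nat.factorial_pos _))
  calc (∏ x, (μ.1 x - m.1 x).factorial) * k.factorial * (nuSub μ m * (n₀ + k).descFactorial n₀)
      = ((∏ x, (μ.1 x - m.1 x).factorial) * nuSub μ m)
        * (k.factorial * (n₀ + k).descFactorial n₀) := by ring
    _ = k.factorial * (n₀ + k).factorial := by rw [e1, e3]
    _ = k.factorial * ((∏ x, (μ.1 x).factorial) * nu μ) := by rw [e2]
    _ = k.factorial * ((∏ x, ((μ.1 x - m.1 x).factorial * (μ.1 x).descFactorial (m.1 x))) * nu μ) := by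
        congr 2
        exact (Finset.prod_congr rfl fun x _ => e4 x).symm
    _ = (∏ x, (μ.1 x - m.1 x).factorial) * k.factorial
        * (nu μ * ∏ x, (μ.1 x).descFactorial (m.1 x)) := by
        rw [Finset.prod_mul_distrib]; ring

lemma ratio_eq {n₀ k : ℕ} (μ : CVec X (n₀ + k)) (m : CVec X n₀)
    (hle : ∀ x, m.1 x ≤ μ.1 x) :
    (nuSub μ m : ℝ) / (nu μ : ℝ)
      = (∏ x, ((μ.1 x).descFactorial (m.1 x) : ℝ)) / ((n₀ + k).descFactorial n₀ : ℝ) := by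
  have hν : (0:ℝ) < (nu μ : ℝ) := by exact_mod_cast nu_pos μ
  have hD : (0:ℝ) < ((n₀ + k).descFactorial n₀ : ℝ) := by
    have : (n₀ + k).descFactorial n₀ ≠ 0 := by
      rw [Ne, Nat.descFactorial_eq_zero_iff_lt]; omega
    exact_mod_cast Nat.pos_of_ne_zero this
  rw [div_eq_div_iff hν.ne' hD.ne']
  have h := congrArg (fun t : ℕ => (t : ℝ)) (nuSub_ratio_nat μ m hle)
  push_cast at h
  linarith [h]
end Weight

section WeightBound
variable {X : Type*} [Fintype X] [DecidableEq X]

set_option maxHeartbeats 2000000 in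
lemma weight_bound {n₀ k : ℕ} (hn₀ : 1 ≤ n₀) (hk : n₀ ≤ k)
    (μ : CVec X (n₀ + k)) (m : CVec X n₀) :
    |(nuSub μ m : ℝ) / (nu μ : ℝ) - ∏ x, ((μ.1 x : ℝ) / ((n₀ + k : ℕ) : ℝ)) ^ m.1 x|
      ≤ ((n₀:ℝ)^2 * 2^n₀ + (n₀:ℝ)^2 + (n₀:ℝ)) / ((n₀ + k : ℕ) : ℝ) := by
  classical
  set N : ℝ := ((n₀ + k : ℕ) : ℝ) with hNdef
  have hN : (0:ℝ) < N := by
    rw [hNdef]; exact_mod_cast Nat.lt_of_lt_of_le (by omega) (le_refl (n₀ + k))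
  have hμle : ∀ x, (μ.1 x : ℝ) ≤ N := by
    intro x
    rw [hNdef]
    exact_mod_cast le_of_le_of_eq
      (Finset.single_le_sum (f := μ.1) (fun i _ => Nat.zero_le _) (Finset.mem_univ x)) μ.2
  have hmle : ∀ x, m.1 x ≤ n₀ := fun x =>
    le_of_le_of_eq (Finset.single_le_sum (f := m.1) (fun i _ => Nat.zero_le _)
      (Finset.mem_univ x)) m.2
  have hfrac01 : ∀ x, 0 ≤ (μ.1 x : ℝ) / N ∧ (μ.1 x : ℝ) / N ≤ 1 := by
    intro x
    constructor
    · positivity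
    · rw [div_le_one hN]; exact hμle x
  have hCpos : (0:ℝ) ≤ (n₀:ℝ)^2 * 2^n₀ + (n₀:ℝ)^2 := by positivity
  by_cases hle : ∀ x, m.1 x ≤ μ.1 x
  · -- main case
    obtain ⟨k₀, hk₀⟩ : ∃ k₀, n₀ = k₀ + 1 := ⟨n₀ - 1, by omega⟩
    rw [ratio_eq μ m hle]
    set A : ℝ := ∏ x, ((μ.1 x).descFactorial (m.1 x) : ℝ) with hAdef
    set B : ℝ := ∏ x, ((μ.1 x : ℝ)) ^ m.1 x with hBdef
    set D : ℝ := ((n₀ + k).descFactorial n₀ : ℝ) with hDdef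
    set E : ℝ := N ^ n₀ with hEdef
    have hE0 : (0:ℝ) < E := by rw [hEdef]; positivity
    have hD0 : (0:ℝ) < D := by
      rw [hDdef]
      have : (n₀ + k).descFactorial n₀ ≠ 0 := by
        rw [Ne, Nat.descFactorial_eq_zero_iff_lt]; omega
      exact_mod_cast Nat.pos_of_ne_zero this
    have hpow : ∏ x, N ^ m.1 x = N ^ n₀ := by
      rw [Finset.prod_pow_eq_pow_sum, m.2]
    have hprodB : ∏ x, ((μ.1 x : ℝ) / N) ^ m.1 x = B / E := by
      rw [hBdef, hEdef, ← hpow, ← Finset.prod_div_distrib]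
      exact Finset.prod_congr rfl fun x _ => div_pow _ _ _
    have hprodA : ∏ x, ((μ.1 x).descFactorial (m.1 x) : ℝ) / N ^ m.1 x = A / E := by
      rw [hAdef, hEdef, ← hpow, ← Finset.prod_div_distrib]
    have hA0 : (0:ℝ) ≤ A := by rw [hAdef]; positivity
    have hAB : A ≤ B := by
      rw [hAdef, hBdef]
      refine Finset.prod_le_prod (fun x _ => by positivity) (fun x _ => ?_)
      exact_mod_cast Nat.descFactorial_le_pow _ _
    have hBE : B ≤ E := by
      rw [hBdef, hEdef, ← hpow]
      exact Finset.prod_le_prod (fun x _ => by positivity)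
        (fun x _ => pow_le_pow_left₀ (by positivity) (hμle x) _)
    have hDE : D ≤ E := by
      rw [hDdef, hEdef, hNdef]
      calc ((n₀ + k).descFactorial n₀ : ℝ) ≤ ((n₀ + k) ^ n₀ : ℕ) := by
            exact_mod_cast Nat.descFactorial_le_pow _ _
        _ = ((n₀ + k : ℕ) : ℝ) ^ n₀ := by push_cast; ring
    have hED2 : N * (E - D) ≤ (n₀:ℝ)^2 * E := by
      have hnat := pow_le_desc_aux (n₀ + k) k₀
      rw [← hk₀] at hnat
      have hcast : N ^ n₀ ≤ D + (n₀:ℝ)^2 * N ^ k₀ := by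
        rw [hNdef, hDdef]
        have := (Nat.cast_le (α := ℝ)).mpr hnat
        push_cast at this
        calc ((n₀ + k : ℕ):ℝ) ^ n₀ = ((n₀:ℝ) + k) ^ n₀ := by push_cast; ring
          _ ≤ ((n₀ + k).descFactorial n₀ : ℝ) + ((n₀:ℝ)) * n₀ * ((n₀:ℝ) + k) ^ k₀ := by
              rw [hk₀] at this ⊢
              push_cast at this ⊢
              convert this using 3 <;> push_cast <;> ring
          _ = ((n₀ + k).descFactorial n₀ : ℝ) + (n₀:ℝ)^2 * ((n₀:ℝ) + k) ^ k₀ := by ring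
          _ = ((n₀ + k).descFactorial n₀ : ℝ) + (n₀:ℝ)^2 * ((n₀ + k : ℕ):ℝ) ^ k₀ := by
              push_cast; ring
      have hEkN : E = N ^ k₀ * N := by rw [hEdef, hk₀, pow_succ]
      have h1 : N * (E - D) ≤ N * ((n₀:ℝ)^2 * N ^ k₀) := by
        have : E - D ≤ (n₀:ℝ)^2 * N ^ k₀ := by rw [hEdef]; linarith [hcast]
        exact mul_le_mul_of_nonneg_left this hN.le
      calc N * (E - D) ≤ N * ((n₀:ℝ)^2 * N ^ k₀) := h1
        _ = (n₀:ℝ)^2 * (N ^ k₀ * N) := by ring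
        _ = (n₀:ℝ)^2 * E := by rw [← hEkN]
    have h2D : E ≤ 2 ^ n₀ * D := by
      have hnat := sub_pow_le_desc (n₀ + k) n₀
      have hkk : (n₀ + k) - n₀ = k := by omega
      rw [hkk] at hnat
      have hkD : ((k:ℝ)) ^ n₀ ≤ D := by
        rw [hDdef]; exact_mod_cast hnat
      have hN2k : N ≤ 2 * (k:ℝ) := by
        rw [hNdef]; push_cast; have : (n₀:ℝ) ≤ k := by exact_mod_cast hk
        linarith
      calc E = N ^ n₀ := hEdef
        _ ≤ (2 * (k:ℝ)) ^ n₀ := pow_le_pow_left₀ hN.le hN2k _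
        _ = 2 ^ n₀ * (k:ℝ) ^ n₀ := mul_pow _ _ _
        _ ≤ 2 ^ n₀ * D := by
            have : (0:ℝ) ≤ 2 ^ n₀ := by positivity
            nlinarith
    -- B ≤ A + (n₀²/N) * E
    have hBA : B ≤ A + (n₀:ℝ)^2 / N * E := by
      have hkey := prod_le_prod_add Finset.univ
        (fun x => ((μ.1 x).descFactorial (m.1 x) : ℝ) / N ^ m.1 x)
        (fun x => ((μ.1 x : ℝ) / N) ^ m.1 x)
        (fun x _ => by positivity)
        (fun x _ => by
          show ((μ.1 x).descFactorial (m.1 x) : ℝ) / N ^ m.1 x ≤ ((μ.1 x : ℝ) / N) ^ m.1 x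
          rw [div_pow]
          gcongr
          exact_mod_cast Nat.descFactorial_le_pow _ _)
        (fun x _ => pow_le_one₀ (hfrac01 x).1 (hfrac01 x).2)
      rw [hprodA, hprodB] at hkey
      have hsumle : ∑ x, (((μ.1 x : ℝ) / N) ^ m.1 x
          - ((μ.1 x).descFactorial (m.1 x) : ℝ) / N ^ m.1 x) ≤ (n₀:ℝ)^2 / N := by
        have hterm : ∀ x, ((μ.1 x : ℝ) / N) ^ m.1 x
            - ((μ.1 x).descFactorial (m.1 x) : ℝ) / N ^ m.1 x ≤ ((m.1 x : ℝ))^2 / N := by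
          intro x
          rcases Nat.eq_zero_or_pos (m.1 x) with h0 | hpos
          · rw [h0]
            norm_num
          · obtain ⟨j, hj⟩ : ∃ j, m.1 x = j + 1 := ⟨m.1 x - 1, by omega⟩
            rw [hj, div_pow, div_sub_div_same]
            have hnat := pow_le_desc_aux (μ.1 x) j
            have hc : (μ.1 x : ℝ) ^ (j+1) - ((μ.1 x).descFactorial (j+1) : ℝ)
                ≤ ((j:ℝ)+1)^2 * (μ.1 x : ℝ) ^ j := by
              have := (Nat.cast_le (α := ℝ)).mpr hnat
              push_cast at this
              nlinarith [this]
            calc ((μ.1 x : ℝ) ^ (j+1) - ((μ.1 x).descFactorial (j+1) : ℝ)) / N ^ (j+1)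
                ≤ (((j:ℝ)+1)^2 * (μ.1 x : ℝ) ^ j) / N ^ (j+1) := by gcongr
              _ ≤ (((j:ℝ)+1)^2 * N ^ j) / N ^ (j+1) := by
                  gcongr
                  exact hμle x
              _ = (((j+1 : ℕ)) : ℝ)^2 / N := by
                  rw [pow_succ]
                  field_simp
                  push_cast; ring
        calc ∑ x, (((μ.1 x : ℝ) / N) ^ m.1 x
              - ((μ.1 x).descFactorial (m.1 x) : ℝ) / N ^ m.1 x)
            ≤ ∑ x, ((m.1 x : ℝ))^2 / N := Finset.sum_le_sum fun x _ => hterm x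
          _ ≤ (n₀:ℝ)^2 / N := by
              rw [← Finset.sum_div]
              refine div_le_div_of_nonneg_right ?_ hN.le
              have hnat : ∑ x, m.1 x * m.1 x ≤ n₀ * n₀ := by
                calc ∑ x, m.1 x * m.1 x ≤ ∑ x, n₀ * m.1 x :=
                      Finset.sum_le_sum fun x _ => Nat.mul_le_mul_right _ (hmle x)
                  _ = n₀ * ∑ x, m.1 x := by rw [Finset.mul_sum]
                  _ = n₀ * n₀ := by rw [m.2]
              have := (Nat.cast_le (α := ℝ)).mpr hnat
              push_cast at this
              calc ∑ x, ((m.1 x : ℝ))^2 = ∑ x, (m.1 x : ℝ) * (m.1 x : ℝ) := by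
                    refine Finset.sum_congr rfl fun x _ => sq (m.1 x : ℝ) ▸ by ring
                _ ≤ (n₀:ℝ) * n₀ := this
                _ = (n₀:ℝ)^2 := by ring
      have hfinal : B / E ≤ A / E + (n₀:ℝ)^2 / N := le_trans hkey (by linarith)
      have := mul_le_mul_of_nonneg_right hfinal hE0.le
      rw [div_mul_cancel₀ _ hE0.ne', add_mul, div_mul_cancel₀ _ hE0.ne'] at this
      linarith
    rw [hprodB, abs_sub_le_iff]
    constructor
    · -- A/D − B/E ≤ C/N
      have key1 : A / D - B / E ≤ (n₀:ℝ)^2 * 2^n₀ / N := by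
        rw [div_sub_div _ _ hD0.ne' hE0.ne', div_le_div_iff₀ (mul_pos hD0 hE0) hN]
        nlinarith [mul_nonneg (mul_nonneg hN.le hE0.le) (sub_nonneg.mpr hAB),
          mul_nonneg (mul_nonneg hN.le (sub_nonneg.mpr hBE)) (sub_nonneg.mpr hDE),
          mul_nonneg hE0.le (sub_nonneg.mpr hED2),
          mul_nonneg (mul_nonneg (sq_nonneg (n₀:ℝ)) hE0.le) (sub_nonneg.mpr h2D)]
      have h7 : (n₀:ℝ)^2 * 2^n₀ / N ≤ ((n₀:ℝ)^2 * 2^n₀ + (n₀:ℝ)^2 + n₀) / N := by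
        refine div_le_div_of_nonneg_right ?_ hN.le
        nlinarith [sq_nonneg ((n₀:ℝ)), (Nat.cast_nonneg n₀ : (0:ℝ) ≤ (n₀:ℝ)),
          pow_nonneg (by norm_num : (0:ℝ) ≤ 2) n₀, sq_nonneg ((n₀:ℝ) * 2 ^ n₀)]
      linarith
    · -- B/E − A/D ≤ C/N
      have hAED : A / E ≤ A / D := div_le_div_of_nonneg_left hA0 hD0 hDE
      have key2 : B / E - A / D ≤ (n₀:ℝ)^2 / N := by
        have h8 : B / E - A / E ≤ (n₀:ℝ)^2 / N := by
          rw [div_sub_div_same, div_le_div_iff₀ hE0 hN]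
          have := mul_le_mul_of_nonneg_right (show B - A ≤ (n₀:ℝ)^2 / N * E by linarith) hN.le
          calc (B - A) * N ≤ (n₀:ℝ)^2 / N * E * N := this
            _ = (n₀:ℝ)^2 * E * (N / N) := by ring
            _ = (n₀:ℝ)^2 * E := by rw [div_self hN.ne', mul_one]
        linarith
      have h9 : (n₀:ℝ)^2 / N ≤ ((n₀:ℝ)^2 * 2^n₀ + (n₀:ℝ)^2 + n₀) / N := by
        refine div_le_div_of_nonneg_right ?_ hN.le
        nlinarith [sq_nonneg ((n₀:ℝ)), (Nat.cast_nonneg n₀ : (0:ℝ) ≤ (n₀:ℝ)),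
          pow_nonneg (by norm_num : (0:ℝ) ≤ 2) n₀, sq_nonneg ((n₀:ℝ) * 2 ^ n₀)]
      linarith
  · -- degenerate case: nuSub = 0
    push_neg at hle
    obtain ⟨x₀, hx₀⟩ := hle
    have hzero : nuSub μ m = 0 := by unfold nuSub; rw [if_neg]; push_neg; exact ⟨x₀, hx₀⟩
    rw [hzero]
    have hP0 : (0:ℝ) ≤ ∏ x, ((μ.1 x : ℝ) / N) ^ m.1 x :=
      Finset.prod_nonneg fun x _ => pow_nonneg (hfrac01 x).1 _
    rw [Nat.cast_zero, zero_div, zero_sub, abs_neg, abs_of_nonneg hP0]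
    have hm₀pos : 1 ≤ m.1 x₀ := by omega
    have hbound : ∏ x, ((μ.1 x : ℝ) / N) ^ m.1 x ≤ (n₀:ℝ) / N := by
      calc ∏ x, ((μ.1 x : ℝ) / N) ^ m.1 x
          = ((μ.1 x₀ : ℝ) / N) ^ m.1 x₀ * ∏ x ∈ Finset.univ.erase x₀, ((μ.1 x : ℝ) / N) ^ m.1 x := by
            exact (Finset.mul_prod_erase _ _ (Finset.mem_univ x₀)).symm
        _ ≤ ((μ.1 x₀ : ℝ) / N) ^ m.1 x₀ * 1 := by
            refine mul_le_mul_of_nonneg_left ?_ (pow_nonneg (hfrac01 x₀).1 _)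
            exact Finset.prod_le_one (fun x _ => pow_nonneg (hfrac01 x).1 _)
              (fun x _ => pow_le_one₀ (hfrac01 x).1 (hfrac01 x).2)
        _ = ((μ.1 x₀ : ℝ) / N) ^ m.1 x₀ := mul_one _
        _ ≤ (μ.1 x₀ : ℝ) / N := pow_le_of_le_one (hfrac01 x₀).1 (hfrac01 x₀).2 (by omega)
        _ ≤ (n₀:ℝ) / N := by
            refine div_le_div_of_nonneg_right ?_ hN.le
            have : μ.1 x₀ ≤ n₀ := le_trans (Nat.le_of_lt hx₀) (hmle x₀)
            exact_mod_cast this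
    refine le_trans hbound ?_
    refine div_le_div_of_nonneg_right ?_ hN.le
    nlinarith [sq_nonneg ((n₀:ℝ)), (Nat.cast_nonneg n₀ : (0:ℝ) ≤ (n₀:ℝ)),
          pow_nonneg (by norm_num : (0:ℝ) ≤ 2) n₀, sq_nonneg ((n₀:ℝ) * 2 ^ n₀)]
end WeightBound

section Final
variable {X : Type*} [Fintype X] [DecidableEq X]

lemma bern_nonneg {n : ℕ} (m : CVec X n) (θ : SimplexPt X) : 0 ≤ Bern m θ.1 := by
  unfold Bern
  refine mul_nonneg (Nat.cast_nonneg _) (Finset.prod_nonneg fun x _ => pow_nonneg (θ.2.1 x) _)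

lemma bern_sum {n : ℕ} (θ : SimplexPt X) : ∑ m : CVec X n, Bern m θ.1 = 1 := by
  unfold Bern
  rw [cvec_sum_pow, θ.2.2, one_pow]

lemma coMn_ge {n : ℕ} (g : CVec X n → ℝ) (θ : SimplexPt X) :
    sInf (Set.range g) ≤ CoMn g θ.1 := by
  have hbdd : BddBelow (Set.range g) := (Set.finite_range g).bddBelow
  calc sInf (Set.range g) = sInf (Set.range g) * ∑ m : CVec X n, Bern m θ.1 := by
        rw [bern_sum, mul_one]
    _ = ∑ m : CVec X n, sInf (Set.range g) * Bern m θ.1 := by rw [Finset.mul_sum]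
    _ ≤ ∑ m : CVec X n, g m * Bern m θ.1 :=
        Finset.sum_le_sum fun m _ =>
          mul_le_mul_of_nonneg_right (csInf_le hbdd ⟨m, rfl⟩) (bern_nonneg m θ)
    _ = CoMn g θ.1 := rfl

lemma coMn_le {n : ℕ} (g : CVec X n → ℝ) (θ : SimplexPt X) :
    CoMn g θ.1 ≤ sSup (Set.range g) := by
  have hbdd : BddAbove (Set.range g) := (Set.finite_range g).bddAbove
  calc CoMn g θ.1 = ∑ m : CVec X n, g m * Bern m θ.1 := rfl
    _ ≤ ∑ m : CVec X n, sSup (Set.range g) * Bern m θ.1 :=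
        Finset.sum_le_sum fun m _ =>
          mul_le_mul_of_nonneg_right (le_csSup hbdd ⟨m, rfl⟩) (bern_nonneg m θ)
    _ = sSup (Set.range g) * ∑ m : CVec X n, Bern m θ.1 := by rw [Finset.mul_sum]
    _ = sSup (Set.range g) := by rw [bern_sum, mul_one]

lemma gbar_close {n₀ k : ℕ} (hn₀ : 1 ≤ n₀) (hk : n₀ ≤ k) (g : CVec X n₀ → ℝ)
    (μ : CVec X (n₀ + k)) :
    |gbar g μ - CoMn g (freqPt (show 0 < n₀ + k by omega) μ).1|
      ≤ (∑ m : CVec X n₀, (nu m : ℝ) * |g m|) * ((n₀:ℝ)^2 * 2^n₀ + (n₀:ℝ)^2 + (n₀:ℝ))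
          / ((n₀ + k : ℕ) : ℝ) := by
  classical
  have hN : (0:ℝ) < ((n₀ + k : ℕ) : ℝ) := by exact_mod_cast (by omega : 0 < n₀ + k)
  have hdiff : gbar g μ - CoMn g (freqPt (show 0 < n₀ + k by omega) μ).1
      = ∑ m : CVec X n₀,
          g m * (nu m : ℝ) * ((nuSub μ m : ℝ) / (nu μ : ℝ)
            - ∏ x, ((μ.1 x : ℝ) / ((n₀ + k : ℕ) : ℝ)) ^ m.1 x) := by
    unfold gbar CoMn Bern freqPt
    rw [← Finset.sum_sub_distrib]
    refine Finset.sum_congr rfl fun m _ => ?_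
    ring
  rw [hdiff]
  calc |∑ m : CVec X n₀, g m * (nu m : ℝ) * ((nuSub μ m : ℝ) / (nu μ : ℝ)
          - ∏ x, ((μ.1 x : ℝ) / ((n₀ + k : ℕ) : ℝ)) ^ m.1 x)|
      ≤ ∑ m : CVec X n₀, |g m * (nu m : ℝ) * ((nuSub μ m : ℝ) / (nu μ : ℝ)
          - ∏ x, ((μ.1 x : ℝ) / ((n₀ + k : ℕ) : ℝ)) ^ m.1 x)| :=
        Finset.abs_sum_le_sum_abs _ _
    _ ≤ ∑ m : CVec X n₀, (nu m : ℝ) * |g m|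
          * (((n₀:ℝ)^2 * 2^n₀ + (n₀:ℝ)^2 + (n₀:ℝ)) / ((n₀ + k : ℕ) : ℝ)) := by
        refine Finset.sum_le_sum fun m _ => ?_
        rw [abs_mul, abs_mul]
        have h1 := weight_bound hn₀ hk μ m
        have h2 : |(nu m : ℝ)| = (nu m : ℝ) := abs_of_nonneg (Nat.cast_nonneg _)
        rw [h2]
        calc |g m| * (nu m : ℝ) * |(nuSub μ m : ℝ) / (nu μ : ℝ)
              - ∏ x, ((μ.1 x : ℝ) / ((n₀ + k : ℕ) : ℝ)) ^ m.1 x|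
            ≤ |g m| * (nu m : ℝ)
              * (((n₀:ℝ)^2 * 2^n₀ + (n₀:ℝ)^2 + (n₀:ℝ)) / ((n₀ + k : ℕ) : ℝ)) := by
              refine mul_le_mul_of_nonneg_left h1 (by positivity)
          _ = (nu m : ℝ) * |g m|
              * (((n₀:ℝ)^2 * 2^n₀ + (n₀:ℝ)^2 + (n₀:ℝ)) / ((n₀ + k : ℕ) : ℝ)) := by ring
    _ = (∑ m : CVec X n₀, (nu m : ℝ) * |g m|) * ((n₀:ℝ)^2 * 2^n₀ + (n₀:ℝ)^2 + (n₀:ℝ))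
          / ((n₀ + k : ℕ) : ℝ) := by
        rw [← Finset.sum_mul, mul_div_assoc]
end Final

/-- the minimal and maximal Bernstein coefficients of a polynomial gamble `p`
converge, as the degree goes to infinity, to the minimum and maximum of `p` on the
simplex. -/
theorem stmt19 {X : Type*} [Fintype X] [DecidableEq X] [Nonempty X]
    (p : SimplexPt X → ℝ) (n₀ : ℕ) (hn₀ : 1 ≤ n₀)
    (b : ∀ n : ℕ, CVec X n → ℝ)
    (hb : ∀ n : ℕ, n₀ ≤ n → ∀ θ : SimplexPt X, p θ = CoMnP (b n) θ) :
    Tendsto (fun n : ℕ => sInf (Set.range (b n))) atTop (𝓝 (sInf (Set.range p))) ∧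
    Tendsto (fun n : ℕ => sSup (Set.range (b n))) atTop (𝓝 (sSup (Set.range p))) := by
  classical
  have hsim : Nonempty (SimplexPt X) := by
    refine ⟨⟨fun x => if x = Classical.arbitrary X then 1 else 0, fun x => ?_, by simp⟩⟩
    dsimp only
    split <;> norm_num
  set Mi := sInf (Set.range p) with hMi
  set Ma := sSup (Set.range p) with hMa
  set g : CVec X n₀ → ℝ := b n₀ with hg
  have hrange : ∀ θ : SimplexPt X,
      sInf (Set.range g) ≤ p θ ∧ p θ ≤ sSup (Set.range g) := by
    intro θ
    rw [hb n₀ le_rfl θ]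
    exact ⟨coMn_ge g θ, coMn_le g θ⟩
  have hbddb : BddBelow (Set.range p) := by
    refine ⟨sInf (Set.range g), ?_⟩
    rintro y ⟨θ, rfl⟩
    exact (hrange θ).1
  have hbdda : BddAbove (Set.range p) := by
    refine ⟨sSup (Set.range g), ?_⟩
    rintro y ⟨θ, rfl⟩
    exact (hrange θ).2
  have hpne : (Set.range p).Nonempty := Set.range_nonempty _
  set C : ℝ := (∑ m : CVec X n₀, (nu m : ℝ) * |g m|) * ((n₀:ℝ)^2 * 2^n₀ + (n₀:ℝ)^2 + (n₀:ℝ))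
    with hC
  have hC0 : 0 ≤ C := by
    rw [hC]
    refine mul_nonneg (Finset.sum_nonneg fun m _ =>
      mul_nonneg (Nat.cast_nonneg _) (abs_nonneg _)) (by positivity)
  have key : ∀ n : ℕ, 2 * n₀ ≤ n →
      (Mi - C / n ≤ sInf (Set.range (b n)) ∧ sInf (Set.range (b n)) ≤ Mi) ∧
      (Ma ≤ sSup (Set.range (b n)) ∧ sSup (Set.range (b n)) ≤ Ma + C / n) := by
    intro n hn
    obtain ⟨k, rfl⟩ : ∃ k, n = n₀ + k := ⟨n - n₀, by omega⟩
    have hk : n₀ ≤ k := by omega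
    have hn₀k : n₀ ≤ n₀ + k := by omega
    -- the coefficients are forced: b (n₀+k) = gbar g
    have heq : ∀ μ : CVec X (n₀ + k), b (n₀ + k) μ = gbar g μ := by
      have hz := coMn_zero (n := n₀ + k) (by omega)
        (fun μ => b (n₀ + k) μ - gbar g μ) ?_
      · intro μ
        have := hz μ
        try simp only at this
        linarith
      · intro θ
        have h1 : CoMn (b (n₀ + k)) θ.1 = p θ := (hb _ hn₀k θ).symm
        have h2 : CoMn (fun μ : CVec X (n₀ + k) => gbar g μ) θ.1 = CoMn g θ.1 :=
          elevation g θ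
        have h3 : CoMn g θ.1 = p θ := (hb n₀ le_rfl θ).symm
        have hsub : CoMn (fun μ : CVec X (n₀ + k) => b (n₀ + k) μ - gbar g μ) θ.1
            = CoMn (b (n₀ + k)) θ.1 - CoMn (fun μ : CVec X (n₀ + k) => gbar g μ) θ.1 := by
          unfold CoMn
          rw [← Finset.sum_sub_distrib]
          exact Finset.sum_congr rfl fun μ _ => by ring
        rw [hsub, h1, h2, h3, sub_self]
    have hclose : ∀ μ : CVec X (n₀ + k),
        |b (n₀ + k) μ - p (freqPt (show 0 < n₀ + k by omega) μ)|
          ≤ C / ((n₀ + k : ℕ) : ℝ) := by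
      intro μ
      rw [heq μ, hb n₀ le_rfl (freqPt (show 0 < n₀ + k by omega) μ)]
      exact le_of_le_of_eq (gbar_close hn₀ hk g μ) (by rw [hC])
    have hfin : (Set.range (b (n₀ + k))).Finite := Set.finite_range _
    have hbne : (Set.range (b (n₀ + k))).Nonempty := Set.range_nonempty _
    constructor
    · constructor
      · -- Mi − C/n ≤ sInf
        obtain ⟨μmin, hμmin⟩ := hbne.csInf_mem hfin
        rw [← hμmin]
        have h4 := hclose μmin
        have h5 : Mi ≤ p (freqPt (show 0 < n₀ + k by omega) μmin) :=
          csInf_le hbddb ⟨_, rfl⟩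
        have h6 := abs_le.mp h4
        push_cast at h6 ⊢
        linarith [h6.1]
      · -- sInf ≤ Mi
        refine le_csInf hpne ?_
        rintro y ⟨θ, rfl⟩
        rw [hb _ hn₀k θ]
        exact coMn_ge (b (n₀ + k)) θ
    · constructor
      · -- Ma ≤ sSup
        refine csSup_le hpne ?_
        rintro y ⟨θ, rfl⟩
        rw [hb _ hn₀k θ]
        exact coMn_le (b (n₀ + k)) θ
      · -- sSup ≤ Ma + C/n
        obtain ⟨μmax, hμmax⟩ := hbne.csSup_mem hfin
        rw [← hμmax]
        have h4 := hclose μmax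
        have h5 : p (freqPt (show 0 < n₀ + k by omega) μmax) ≤ Ma :=
          le_csSup hbdda ⟨_, rfl⟩
        have h6 := abs_le.mp h4
        push_cast at h6 ⊢
        linarith [h6.2]
  have hloT : Tendsto (fun n : ℕ => Mi - C / n) atTop (𝓝 Mi) := by
    have := (tendsto_const_div_atTop_nhds_zero_nat C)
    have h := (tendsto_const_nhds : Tendsto (fun _ : ℕ => Mi) atTop (𝓝 Mi)).sub this
    simpa using h
  have hhiT : Tendsto (fun n : ℕ => Ma + C / n) atTop (𝓝 Ma) := by
    have := (tendsto_const_div_atTop_nhds_zero_nat C)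
    have h := (tendsto_const_nhds : Tendsto (fun _ : ℕ => Ma) atTop (𝓝 Ma)).add this
    simpa using h
  constructor
  · refine tendsto_of_tendsto_of_tendsto_of_le_of_le' hloT tendsto_const_nhds ?_ ?_
    · filter_upwards [eventually_ge_atTop (2 * n₀)] with n hn
      exact ((key n hn).1).1
    · filter_upwards [eventually_ge_atTop (2 * n₀)] with n hn
      exact ((key n hn).1).2
  · refine tendsto_of_tendsto_of_tendsto_of_le_of_le' tendsto_const_nhds hhiT ?_ ?_
    · filter_upwards [eventually_ge_atTop (2 * n₀)] with n hn
      exact ((key n hn).2).1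
    · filter_upwards [eventually_ge_atTop (2 * n₀)] with n hn
      exact ((key n hn).2).2
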